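/- Let f : ℤ³ → ℂ be any function and define g(k_1, k_2, k_3, k_4) := ∑^{(k_1,k_2,k_3,k_4)}_{(l_1,l_2,l_3)} f(l_1, l_2, l_3). Then for all integers k_1, k_2, k_3, k_4: (T'_{2,3} g)(k_1, k_2, k_3, k_4) = −(1/2)[ ∑_{l_1=k_2+1}^{k_3} ∑_{l_2=k_2+1}^{k_3} ∑_{l_3=k_2}^{k_4} (T'_{1,2} f)(l_1, l_2, l_3) + ∑_{l_1=k_1}^{k_2+1} ∑_{l_2=k_2}^{k_3−1} ∑_{l_3=k_2}^{k_3−1} (T'_{2,3} f)(l_1, l_2, l_3) ] + (1/2)[ ∑_{l_1=k_2}^{k_3−1} ∑_{l_2=k_2}^{k_3−1} (Δ_2 (id + E_1) T'_{1,2} f)(l_1, l_2, k_2) − ∑_{l_2=k_2}^{k_3−1} ∑_{l_3=k_2}^{k_3−1} (Δ_2 (id + E_3) T'_{2,3} f)(k_2+1, l_2, l_3) ] + (1/2)[ (T'_{1,2} f)(k_2, k_2, k_2+1) − (T'_{1,2} f)(k_2, k_2, k_3+1) + (T'_{2,3} f)(k_2, k_2, k_2) − (T'_{2,3} f)(k_3,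 k_2, k_2) ] − (T'_{1,2} f)(k_2, k_3, k_2+1) − (T'_{2,3} f)(k_2, k_2, k_3), where all sums are extended sums, T'_{i,i+1} acts on the i-th and (i+1)-st arguments, and notation such as (T'_{1,2} f)(a, b, c) means the operator is applied first and the resulting function is then evaluated at (a, b, c). -/

import Mathlib

open MvPolynomial Finset

/-- The extended sum `∑_{x=a}^{b} f(x)`: the usual sum if `a ≤ b`, zero if `b = a - 1`,
and `-(f(b+1) + ⋯ + f(a-1))` if `b + 1 ≤ a - 1`. -/
noncomputable def extSum (f : ℤ → ℂ) (a b : ℤ) : ℂ :=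
  if a ≤ b then ∑ x ∈ Finset.Icc a b, f x else -∑ x ∈ Finset.Icc (b + 1) (a - 1), f x

/-- The shift operator `E_i` on functions `ℤⁿ → ℂ`. -/
def Efun {n : ℕ} (i : Fin n) (f : (Fin n → ℤ) → ℂ) : (Fin n → ℤ) → ℂ :=
  fun x => f (Function.update x i (x i + 1))

/-- The difference operator `Δ_i = E_i - id` on functions `ℤⁿ → ℂ`. -/
noncomputable def Dfun {n : ℕ} (i : Fin n) (f : (Fin n → ℤ) → ℂ) : (Fin n → ℤ) → ℂ :=
  fun x => Efun i f x - f x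

/-- The operator `S_{i,j}` exchanging the `i`-th and `j`-th arguments. -/
def Sfun {n : ℕ} (i j : Fin n) (f : (Fin n → ℤ) → ℂ) : (Fin n → ℤ) → ℂ :=
  fun x => f (x ∘ Equiv.swap i j)

/-- The operator `T'_{i,j} = (id + S_{i,j})(id + E_j Δ_i)` on functions `ℤⁿ → ℂ`. -/
noncomputable def Tfun {n : ℕ} (i j : Fin n) (f : (Fin n → ℤ) → ℂ) : (Fin n → ℤ) → ℂ :=
  fun x => (f x + Efun j (Dfun i f) x) + Sfun i j (fun y => f y + Efun j (Dfun i f) y) x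

/-- The recursively defined summation operator `∑^{(k₁,…,k_n)}_{(l₁,…,l_{n-1})}` (here with
`n = m + 2` bottom entries and `m + 1` summation variables):
for `n = 2` it is the extended sum `∑_{l₁=k₁}^{k₂}`, and for `n > 2` it is
`∑^{(k₁,…,k_{n-1})}_{(l₁,…,l_{n-2})} ∑_{l_{n-1}=k_{n-1}+1}^{k_n} A(l₁,…,l_{n-1})
 + ∑^{(k₁,…,k_{n-1}-1)}_{(l₁,…,l_{n-2})} A(l₁,…,l_{n-2},k_{n-1})`. -/
noncomputable def sumOp : (m : ℕ) → (Fin (m + 2) → ℤ) → ((Fin (m + 1) → ℤ) → ℂ) → ℂ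
  | 0, k, A => extSum (fun l => A fun _ => l) (k 0) (k 1)
  | m + 1, k, A =>
      sumOp m (Fin.init k)
        (fun l => extSum (fun t => A (Fin.snoc l t))
          (k ⟨m + 1, by omega⟩ + 1) (k ⟨m + 2, by omega⟩)) +
      sumOp m (Function.update (Fin.init k) (Fin.last (m + 1)) (k ⟨m + 1, by omega⟩ - 1))
        (fun l => A (Fin.snoc l (k ⟨m + 1, by omega⟩)))

lemma extSum_base (h : ℤ → ℂ) (a : ℤ) : extSum h a (a - 1) = 0 := by
  unfold extSum
  rw [if_neg (by omega)]
  simp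

lemma extSum_succ (h : ℤ → ℂ) (a b : ℤ) : extSum h a (b + 1) = extSum h a b + h (b + 1) := by
  unfold extSum
  rcases le_or_gt a b with hab | hab
  · rw [if_pos (by omega), if_pos hab,
      show Finset.Icc a (b+1) = insert (b+1) (Finset.Icc a b) by
        ext x; simp; omega,
      Finset.sum_insert (by simp)]
    ring
  · rcases eq_or_lt_of_le (show b + 1 ≤ a by omega) with he | hl
    · rw [if_pos (by omega), if_neg (by omega), ← he]
      simp
    · rw [if_neg (by omega), if_neg (by omega),
        show Finset.Icc (b+1) (a-1) = insert (b+1) (Finset.Icc (b+1+1) (a-1)) by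
          ext x; simp; omega,
        Finset.sum_insert (by simp)]
      ring

lemma extSum_pred (h : ℤ → ℂ) (a b : ℤ) : extSum h a (b - 1) = extSum h a b - h b := by
  have := extSum_succ h a (b - 1)
  simp at this
  rw [this]; ring

noncomputable def S1 (h : ℤ → ℂ) (n : ℤ) : ℂ := extSum h 0 (n - 1)

lemma S1_succ (h : ℤ → ℂ) (n : ℤ) : S1 h (n + 1) = S1 h n + h n := by
  unfold S1
  rw [show n + 1 - 1 = (n - 1) + 1 by ring, extSum_succ]
  simp

lemma extSum_eq_S1 (h : ℤ → ℂ) (a b : ℤ) : extSum h a b = S1 h (b + 1) - S1 h a := by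
  induction b using Int.inductionOn' (b := a - 1) with
  | zero => rw [extSum_base, show a - 1 + 1 = a by ring]; ring
  | succ k _ ih => rw [extSum_succ, ih, S1_succ h (k+1)]; ring
  | pred k _ ih =>
      rw [extSum_pred, ih, show k - 1 + 1 = k by ring,
        show S1 h k = S1 h ((k-1)+1) by norm_num, S1_succ]
      ring

lemma extSum_zero (a b : ℤ) : extSum (fun _ => (0:ℂ)) a b = 0 := by
  unfold extSum; simp

lemma extSum_add (p q : ℤ → ℂ) (a b : ℤ) :
    extSum (fun x => p x + q x) a b = extSum p a b + extSum q a b := by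
  unfold extSum; split <;> simp [Finset.sum_add_distrib] <;> ring

lemma extSum_sub (p q : ℤ → ℂ) (a b : ℤ) :
    extSum (fun x => p x - q x) a b = extSum p a b - extSum q a b := by
  unfold extSum; split <;> simp [Finset.sum_sub_distrib] <;> ring

lemma extSum_congr (p q : ℤ → ℂ) (hpq : ∀ x, p x = q x) (a b : ℤ) :
    extSum p a b = extSum q a b := by
  have : p = q := funext hpq
  rw [this]

lemma S1_add (p q : ℤ → ℂ) (n : ℤ) : S1 (fun x => p x + q x) n = S1 p n + S1 q n :=
  extSum_add p q 0 (n-1)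

lemma S1_sub (p q : ℤ → ℂ) (n : ℤ) : S1 (fun x => p x - q x) n = S1 p n - S1 q n :=
  extSum_sub p q 0 (n-1)

lemma S1_congr (p q : ℤ → ℂ) (hpq : ∀ x, p x = q x) (n : ℤ) : S1 p n = S1 q n :=
  extSum_congr p q hpq 0 (n-1)

lemma S1_eval (h : ℤ → ℂ) (c : ℤ) : S1 h (c + 1) - S1 h c = h c := by
  rw [S1_succ]; ring

lemma extSum_fubini (F : ℤ → ℤ → ℂ) (a b c d : ℤ) :
    extSum (fun x => extSum (fun y => F x y) c d) a b
      = extSum (fun y => extSum (fun x => F x y) a b) c d := by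
  induction b using Int.inductionOn' (b := a - 1) with
  | zero =>
      rw [extSum_base]
      rw [extSum_congr _ (fun _ => (0:ℂ)) (fun y => extSum_base _ a), extSum_zero]
  | succ k _ ih =>
      rw [extSum_succ, ih,
        extSum_congr (fun y => extSum (fun x => F x y) a (k+1))
          (fun y => extSum (fun x => F x y) a k + F (k+1) y)
          (fun y => extSum_succ _ a k), extSum_add]
  | pred k _ ih =>
      rw [extSum_pred, ih,
        extSum_congr (fun y => extSum (fun x => F x y) a (k-1))
          (fun y => extSum (fun x => F x y) a k - F k y)
          (fun y => extSum_pred _ a k), extSum_sub]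

lemma S1_fubini (F : ℤ → ℤ → ℂ) (n m : ℤ) :
    S1 (fun x => S1 (fun y => F x y) m) n = S1 (fun y => S1 (fun x => F x y) n) m :=
  extSum_fubini F 0 (n-1) 0 (m-1)
-- CORE (appended after lib)
lemma S1_zero (h : ℤ → ℂ) : S1 h 0 = 0 := by
  unfold S1; simpa using extSum_base h 0

lemma S1_pred (h : ℤ → ℂ) (n : ℤ) : S1 h (n - 1) = S1 h n - h (n - 1) := by
  have := S1_succ h (n - 1)
  rw [show n - 1 + 1 = n by ring] at this
  rw [this]; ring

lemma S1_translate (h : ℤ → ℂ) (p n : ℤ) :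
    S1 (fun x => h (x + p)) n = S1 h (n + p) - S1 h p := by
  induction n using Int.inductionOn' (b := 0) with
  | zero => rw [S1_zero, show (0:ℤ) + p = p by ring]; ring
  | succ k _ ih =>
      rw [S1_succ, ih, show k + 1 + p = (k + p) + 1 by ring, S1_succ]; ring
  | pred k _ ih =>
      rw [S1_pred, ih, show k - 1 + p = (k + p) - 1 by ring, S1_pred h (k + p)]; ring

noncomputable def DD (g : ℤ → ℤ → ℂ) (n1 n2 : ℤ) : ℂ :=
  S1 (fun x => S1 (fun y => g x y) n2) n1

noncomputable def TT (g : ℤ → ℤ → ℤ → ℂ) (n1 n2 n3 : ℤ) : ℂ :=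
  S1 (fun x => S1 (fun y => S1 (fun z => g x y z) n3) n2) n1

lemma doubleShift (g : ℤ → ℤ → ℂ) (p q n1 n2 : ℤ) :
    S1 (fun x => S1 (fun y => g (x + p) (y + q)) n2) n1 =
      DD g (n1+p) (n2+q) - DD g p (n2+q) - DD g (n1+p) q + DD g p q := by
  have e1 : ∀ t : ℤ, S1 (fun y => g t (y + q)) n2
      = S1 (fun y => g t y) (n2+q) - S1 (fun y => g t y) q :=
    fun t => S1_translate (fun y => g t y) q n2
  rw [S1_congr _ _ (fun x => e1 (x+p)) n1, S1_sub,
    S1_translate (fun t => S1 (fun y => g t y) (n2+q)) p n1,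
    S1_translate (fun t => S1 (fun y => g t y) q) p n1]
  unfold DD; ring

lemma tripleShift (g : ℤ → ℤ → ℤ → ℂ) (p q r n1 n2 n3 : ℤ) :
    S1 (fun x => S1 (fun y => S1 (fun z => g (x+p) (y+q) (z+r)) n3) n2) n1 =
      TT g (n1+p) (n2+q) (n3+r) - TT g p (n2+q) (n3+r) - TT g (n1+p) q (n3+r) + TT g p q (n3+r)
      - TT g (n1+p) (n2+q) r + TT g p (n2+q) r + TT g (n1+p) q r - TT g p q r := by
  have e1 : ∀ t : ℤ, S1 (fun y => S1 (fun z => g t (y+q) (z+r)) n3) n2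
      = DD (g t) (n2+q) (n3+r) - DD (g t) q (n3+r) - DD (g t) (n2+q) r + DD (g t) q r :=
    fun t => doubleShift (g t) q r n2 n3
  rw [S1_congr _ _ (fun x => e1 (x+p)) n1, S1_add, S1_sub, S1_sub,
    S1_translate (fun t => DD (g t) (n2+q) (n3+r)) p n1,
    S1_translate (fun t => DD (g t) q (n3+r)) p n1,
    S1_translate (fun t => DD (g t) (n2+q) r) p n1,
    S1_translate (fun t => DD (g t) q r) p n1]
  unfold TT DD; ring

lemma DD_swap (g : ℤ → ℤ → ℂ) (m n : ℤ) : DD (fun x y => g y x) m n = DD g n m := by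
  unfold DD; exact S1_fubini (fun x y => g y x) m n

lemma TT_213 (g : ℤ → ℤ → ℤ → ℂ) (n1 n2 n3 : ℤ) :
    TT (fun a b c => g b a c) n1 n2 n3 = TT g n2 n1 n3 := by
  unfold TT; exact S1_fubini (fun x y => S1 (fun z => g y x z) n3) n1 n2

lemma TT_132 (g : ℤ → ℤ → ℤ → ℂ) (n1 n2 n3 : ℤ) :
    TT (fun a b c => g a c b) n1 n2 n3 = TT g n1 n3 n2 := by
  unfold TT
  exact S1_congr _ _ (fun x => S1_fubini (fun y z => g x z y) n2 n3) n1

lemma DD3 (f : ℤ → ℤ → ℤ → ℂ) (c m n : ℤ) :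
    DD (fun x y => f x y c) m n = TT f m n (c+1) - TT f m n c := by
  unfold DD TT
  rw [← S1_sub]
  refine S1_congr _ _ (fun x => ?_) m
  rw [← S1_sub]
  refine S1_congr _ _ (fun y => ?_) n
  exact (S1_eval (fun z => f x y z) c).symm

lemma DD3s (f : ℤ → ℤ → ℤ → ℂ) (c m n : ℤ) :
    DD (fun x y => f y x c) m n = TT f n m (c+1) - TT f n m c := by
  rw [DD_swap (fun u v => f u v c) m n, DD3]

lemma DD1 (f : ℤ → ℤ → ℤ → ℂ) (c m n : ℤ) :
    DD (fun x y => f c x y) m n = TT f (c+1) m n - TT f c m n := by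
  unfold DD TT
  exact (S1_eval (fun u => S1 (fun x => S1 (fun y => f u x y) n) m) c).symm

lemma DD1s (f : ℤ → ℤ → ℤ → ℂ) (c m n : ℤ) :
    DD (fun x y => f c y x) m n = TT f (c+1) n m - TT f c n m := by
  rw [DD_swap (fun u v => f c u v) m n, DD1]

lemma DD2 (f : ℤ → ℤ → ℤ → ℂ) (c m n : ℤ) :
    DD (fun x y => f x c y) m n = TT f m (c+1) n - TT f m c n := by
  unfold DD TT
  rw [← S1_sub]
  refine S1_congr _ _ (fun x => ?_) m
  exact (S1_eval (fun v => S1 (fun y => f x v y) n) c).symm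

lemma SS (f : ℤ → ℤ → ℤ → ℂ) (b c n : ℤ) :
    S1 (fun x => f x b c) n =
      TT f n (b+1) (c+1) - TT f n b (c+1) - TT f n (b+1) c + TT f n b c := by
  have h1 := DD2 f b n (c+1); have h2 := DD2 f b n c
  unfold DD at h1 h2
  rw [S1_congr _ (fun x => S1 (fun z => f x b z) (c+1) - S1 (fun z => f x b z) c)
      (fun x => (S1_eval (fun z => f x b z) c).symm) n, S1_sub, h1, h2]
  ring

lemma eval3 (f : ℤ → ℤ → ℤ → ℂ) (a b c : ℤ) :
    f a b c =
      TT f (a+1) (b+1) (c+1) - TT f a (b+1) (c+1) - TT f (a+1) b (c+1) + TT f a b (c+1)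
      - TT f (a+1) (b+1) c + TT f a (b+1) c + TT f (a+1) b c - TT f a b c := by
  have h1 := SS f b c (a+1); have h2 := SS f b c a
  have e : f a b c = S1 (fun x => f x b c) (a+1) - S1 (fun x => f x b c) a :=
    (S1_eval (fun x => f x b c) a).symm
  rw [e, h1, h2]; ring

lemma TT_zero1 (g : ℤ → ℤ → ℤ → ℂ) (n2 n3 : ℤ) : TT g 0 n2 n3 = 0 := by
  unfold TT; exact S1_zero _
lemma TT_zero2 (g : ℤ → ℤ → ℤ → ℂ) (n1 n3 : ℤ) : TT g n1 0 n3 = 0 := by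
  unfold TT
  rw [S1_congr _ (fun _ => (0:ℂ)) (fun x => S1_zero _) n1]
  exact extSum_zero 0 (n1-1)
lemma TT_zero3 (g : ℤ → ℤ → ℤ → ℂ) (n1 n2 : ℤ) : TT g n1 n2 0 = 0 := by
  unfold TT
  rw [S1_congr _ (fun _ => (0:ℂ)) (fun x => ?_) n1]
  · exact extSum_zero 0 (n1-1)
  · rw [S1_congr _ (fun _ => (0:ℂ)) (fun y => S1_zero _) n2]
    exact extSum_zero 0 (n2-1)
lemma add11 (t : ℤ) : t + 1 + 1 = t + 2 := by ring

lemma Tn110 (f : ℤ → ℤ → ℤ → ℂ) (n1 n2 n3 : ℤ) :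
    S1 (fun x => S1 (fun y => S1 (fun z => f (x + 1) (y + 1) z) n3) n2) n1 = TT f (n1 + 1) (n2 + 1) (n3) - TT f (n1 + 1) (n2 + 1) (0) - TT f (n1 + 1) (1) (n3) + TT f (n1 + 1) (1) (0) - TT f (1) (n2 + 1) (n3) + TT f (1) (n2 + 1) (0) + TT f (1) (1) (n3) - TT f (1) (1) (0) := by
  have h := tripleShift f 1 1 0 n1 n2 n3
  simp only [add_zero] at h
  linear_combination h

lemma Tn010 (f : ℤ → ℤ → ℤ → ℂ) (n1 n2 n3 : ℤ) :
    S1 (fun x => S1 (fun y => S1 (fun z => f x (y + 1) z) n3) n2) n1 = TT f (n1) (n2 + 1) (n3) - TT f (n1) (n2 + 1) (0) - TT f (n1) (1) (n3) + TT f (n1) (1) (0) - TT f (0) (n2 + 1) (n3) + TT f (0) (n2 + 1) (0) + TT f (0) (1) (n3) - TT f (0) (1) (0) := by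
  have h := tripleShift f 0 1 0 n1 n2 n3
  simp only [add_zero] at h
  linear_combination h

lemma Tn001 (f : ℤ → ℤ → ℤ → ℂ) (n1 n2 n3 : ℤ) :
    S1 (fun x => S1 (fun y => S1 (fun z => f x y (z + 1)) n3) n2) n1 = TT f (n1) (n2) (n3 + 1) - TT f (n1) (n2) (1) - TT f (n1) (0) (n3 + 1) + TT f (n1) (0) (1) - TT f (0) (n2) (n3 + 1) + TT f (0) (n2) (1) + TT f (0) (0) (n3 + 1) - TT f (0) (0) (1) := by
  have h := tripleShift f 0 0 1 n1 n2 n3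
  simp only [add_zero] at h
  linear_combination h

lemma Tn011 (f : ℤ → ℤ → ℤ → ℂ) (n1 n2 n3 : ℤ) :
    S1 (fun x => S1 (fun y => S1 (fun z => f x (y + 1) (z + 1)) n3) n2) n1 = TT f (n1) (n2 + 1) (n3 + 1) - TT f (n1) (n2 + 1) (1) - TT f (n1) (1) (n3 + 1) + TT f (n1) (1) (1) - TT f (0) (n2 + 1) (n3 + 1) + TT f (0) (n2 + 1) (1) + TT f (0) (1) (n3 + 1) - TT f (0) (1) (1) := by
  have h := tripleShift f 0 1 1 n1 n2 n3
  simp only [add_zero] at h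
  linear_combination h

lemma Tp213_110 (f : ℤ → ℤ → ℤ → ℂ) (n1 n2 n3 : ℤ) :
    S1 (fun x => S1 (fun y => S1 (fun z => f (y + 1) (x + 1) z) n3) n2) n1 = TT f (n2 + 1) (n1 + 1) (n3) - TT f (n2 + 1) (n1 + 1) (0) - TT f (1) (n1 + 1) (n3) + TT f (1) (n1 + 1) (0) - TT f (n2 + 1) (1) (n3) + TT f (n2 + 1) (1) (0) + TT f (1) (1) (n3) - TT f (1) (1) (0) := by
  have h := tripleShift (fun a b c => f b a c) 1 1 0 n1 n2 n3
  simp only [add_zero] at h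
  linear_combination h + TT_213 f (n1 + 1) (n2 + 1) (n3) - TT_213 f (n1 + 1) (n2 + 1) (0) - TT_213 f (n1 + 1) (1) (n3) + TT_213 f (n1 + 1) (1) (0) - TT_213 f (1) (n2 + 1) (n3) + TT_213 f (1) (n2 + 1) (0) + TT_213 f (1) (1) (n3) - TT_213 f (1) (1) (0)

lemma Tp213_010 (f : ℤ → ℤ → ℤ → ℂ) (n1 n2 n3 : ℤ) :
    S1 (fun x => S1 (fun y => S1 (fun z => f (y + 1) x z) n3) n2) n1 = TT f (n2 + 1) (n1) (n3) - TT f (n2 + 1) (n1) (0) - TT f (1) (n1) (n3) + TT f (1) (n1) (0) - TT f (n2 + 1) (0) (n3) + TT f (n2 + 1) (0) (0) + TT f (1) (0) (n3) - TT f (1) (0) (0) := by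
  have h := tripleShift (fun a b c => f b a c) 0 1 0 n1 n2 n3
  simp only [add_zero] at h
  linear_combination h + TT_213 f (n1) (n2 + 1) (n3) - TT_213 f (n1) (n2 + 1) (0) - TT_213 f (n1) (1) (n3) + TT_213 f (n1) (1) (0) - TT_213 f (0) (n2 + 1) (n3) + TT_213 f (0) (n2 + 1) (0) + TT_213 f (0) (1) (n3) - TT_213 f (0) (1) (0)

lemma Tp132_010 (f : ℤ → ℤ → ℤ → ℂ) (n1 n2 n3 : ℤ) :
    S1 (fun x => S1 (fun y => S1 (fun z => f x z (y + 1)) n3) n2) n1 = TT f (n1) (n3) (n2 + 1) - TT f (n1) (0) (n2 + 1) - TT f (n1) (n3) (1) + TT f (n1) (0) (1) - TT f (0) (n3) (n2 + 1) + TT f (0) (0) (n2 + 1) + TT f (0) (n3) (1) - TT f (0) (0) (1) := by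
  have h := tripleShift (fun a b c => f a c b) 0 1 0 n1 n2 n3
  simp only [add_zero] at h
  linear_combination h + TT_132 f (n1) (n2 + 1) (n3) - TT_132 f (n1) (n2 + 1) (0) - TT_132 f (n1) (1) (n3) + TT_132 f (n1) (1) (0) - TT_132 f (0) (n2 + 1) (n3) + TT_132 f (0) (n2 + 1) (0) + TT_132 f (0) (1) (n3) - TT_132 f (0) (1) (0)

lemma Tp132_011 (f : ℤ → ℤ → ℤ → ℂ) (n1 n2 n3 : ℤ) :
    S1 (fun x => S1 (fun y => S1 (fun z => f x (z + 1) (y + 1)) n3) n2) n1 = TT f (n1) (n3 + 1) (n2 + 1) - TT f (n1) (1) (n2 + 1) - TT f (n1) (n3 + 1) (1) + TT f (n1) (1) (1) - TT f (0) (n3 + 1) (n2 + 1) + TT f (0) (1) (n2 + 1) + TT f (0) (n3 + 1) (1) - TT f (0) (1) (1) := by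
  have h := tripleShift (fun a b c => f a c b) 0 1 1 n1 n2 n3
  simp only [add_zero] at h
  linear_combination h + TT_132 f (n1) (n2 + 1) (n3 + 1) - TT_132 f (n1) (n2 + 1) (1) - TT_132 f (n1) (1) (n3 + 1) + TT_132 f (n1) (1) (1) - TT_132 f (0) (n2 + 1) (n3 + 1) + TT_132 f (0) (n2 + 1) (1) + TT_132 f (0) (1) (n3 + 1) - TT_132 f (0) (1) (1)

lemma Tn000 (f : ℤ → ℤ → ℤ → ℂ) (n1 n2 n3 : ℤ) :
    S1 (fun x => S1 (fun y => S1 (fun z => f x y z) n3) n2) n1 = TT f n1 n2 n3 := rfl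

lemma Tp213_000 (f : ℤ → ℤ → ℤ → ℂ) (n1 n2 n3 : ℤ) :
    S1 (fun x => S1 (fun y => S1 (fun z => f y x z) n3) n2) n1 = TT f n2 n1 n3 :=
  TT_213 f n1 n2 n3

lemma Tp132_000 (f : ℤ → ℤ → ℤ → ℂ) (n1 n2 n3 : ℤ) :
    S1 (fun x => S1 (fun y => S1 (fun z => f x z y) n3) n2) n1 = TT f n1 n3 n2 :=
  TT_132 f n1 n2 n3

lemma DA_00 (f : ℤ → ℤ → ℤ → ℂ) (c n1 n2 : ℤ) :
    S1 (fun x => S1 (fun y => f x y c) n2) n1 = TT f n1 n2 (c+1) - TT f n1 n2 c := by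
  have h := DD3 f c n1 n2
  unfold DD at h
  exact h

lemma DA_01 (f : ℤ → ℤ → ℤ → ℂ) (c n1 n2 : ℤ) :
    S1 (fun x => S1 (fun y => f x (y + 1) c) n2) n1 = (TT f (n1) (n2 + 1) (c+1) - TT f (n1) (n2 + 1) c) - (TT f (n1) (1) (c+1) - TT f (n1) (1) c) - (TT f (0) (n2 + 1) (c+1) - TT f (0) (n2 + 1) c) + (TT f (0) (1) (c+1) - TT f (0) (1) c) := by
  have h := doubleShift (fun a b => f a b c) 0 1 n1 n2
  simp only [add_zero] at h
  linear_combination h + DD3 f c (n1) (n2 + 1) - DD3 f c (n1) (1) - DD3 f c (0) (n2 + 1) + DD3 f c (0) (1)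

lemma DA_02 (f : ℤ → ℤ → ℤ → ℂ) (c n1 n2 : ℤ) :
    S1 (fun x => S1 (fun y => f x (y + 1 + 1) c) n2) n1 = (TT f (n1) (n2 + 2) (c+1) - TT f (n1) (n2 + 2) c) - (TT f (n1) (2) (c+1) - TT f (n1) (2) c) - (TT f (0) (n2 + 2) (c+1) - TT f (0) (n2 + 2) c) + (TT f (0) (2) (c+1) - TT f (0) (2) c) := by
  have h := doubleShift (fun a b => f a b c) 0 2 n1 n2
  simp only [add_zero] at h
  try simp only [add11]
  linear_combination h + DD3 f c (n1) (n2 + 2) - DD3 f c (n1) (2) - DD3 f c (0) (n2 + 2) + DD3 f c (0) (2)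

lemma DA_10 (f : ℤ → ℤ → ℤ → ℂ) (c n1 n2 : ℤ) :
    S1 (fun x => S1 (fun y => f (x + 1) y c) n2) n1 = (TT f (n1 + 1) (n2) (c+1) - TT f (n1 + 1) (n2) c) - (TT f (n1 + 1) (0) (c+1) - TT f (n1 + 1) (0) c) - (TT f (1) (n2) (c+1) - TT f (1) (n2) c) + (TT f (1) (0) (c+1) - TT f (1) (0) c) := by
  have h := doubleShift (fun a b => f a b c) 1 0 n1 n2
  simp only [add_zero] at h
  linear_combination h + DD3 f c (n1 + 1) (n2) - DD3 f c (n1 + 1) (0) - DD3 f c (1) (n2) + DD3 f c (1) (0)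

lemma DA_11 (f : ℤ → ℤ → ℤ → ℂ) (c n1 n2 : ℤ) :
    S1 (fun x => S1 (fun y => f (x + 1) (y + 1) c) n2) n1 = (TT f (n1 + 1) (n2 + 1) (c+1) - TT f (n1 + 1) (n2 + 1) c) - (TT f (n1 + 1) (1) (c+1) - TT f (n1 + 1) (1) c) - (TT f (1) (n2 + 1) (c+1) - TT f (1) (n2 + 1) c) + (TT f (1) (1) (c+1) - TT f (1) (1) c) := by
  have h := doubleShift (fun a b => f a b c) 1 1 n1 n2
  try simp only [add_zero] at h
  linear_combination h + DD3 f c (n1 + 1) (n2 + 1) - DD3 f c (n1 + 1) (1) - DD3 f c (1) (n2 + 1) + DD3 f c (1) (1)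

lemma DA_12 (f : ℤ → ℤ → ℤ → ℂ) (c n1 n2 : ℤ) :
    S1 (fun x => S1 (fun y => f (x + 1) (y + 1 + 1) c) n2) n1 = (TT f (n1 + 1) (n2 + 2) (c+1) - TT f (n1 + 1) (n2 + 2) c) - (TT f (n1 + 1) (2) (c+1) - TT f (n1 + 1) (2) c) - (TT f (1) (n2 + 2) (c+1) - TT f (1) (n2 + 2) c) + (TT f (1) (2) (c+1) - TT f (1) (2) c) := by
  have h := doubleShift (fun a b => f a b c) 1 2 n1 n2
  try simp only [add_zero] at h
  try simp only [add11]
  linear_combination h + DD3 f c (n1 + 1) (n2 + 2) - DD3 f c (n1 + 1) (2) - DD3 f c (1) (n2 + 2) + DD3 f c (1) (2)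

lemma DA_20 (f : ℤ → ℤ → ℤ → ℂ) (c n1 n2 : ℤ) :
    S1 (fun x => S1 (fun y => f (x + 1 + 1) y c) n2) n1 = (TT f (n1 + 2) (n2) (c+1) - TT f (n1 + 2) (n2) c) - (TT f (n1 + 2) (0) (c+1) - TT f (n1 + 2) (0) c) - (TT f (2) (n2) (c+1) - TT f (2) (n2) c) + (TT f (2) (0) (c+1) - TT f (2) (0) c) := by
  have h := doubleShift (fun a b => f a b c) 2 0 n1 n2
  simp only [add_zero] at h
  try simp only [add11]
  linear_combination h + DD3 f c (n1 + 2) (n2) - DD3 f c (n1 + 2) (0) - DD3 f c (2) (n2) + DD3 f c (2) (0)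

lemma DA_21 (f : ℤ → ℤ → ℤ → ℂ) (c n1 n2 : ℤ) :
    S1 (fun x => S1 (fun y => f (x + 1 + 1) (y + 1) c) n2) n1 = (TT f (n1 + 2) (n2 + 1) (c+1) - TT f (n1 + 2) (n2 + 1) c) - (TT f (n1 + 2) (1) (c+1) - TT f (n1 + 2) (1) c) - (TT f (2) (n2 + 1) (c+1) - TT f (2) (n2 + 1) c) + (TT f (2) (1) (c+1) - TT f (2) (1) c) := by
  have h := doubleShift (fun a b => f a b c) 2 1 n1 n2
  try simp only [add_zero] at h
  try simp only [add11]
  linear_combination h + DD3 f c (n1 + 2) (n2 + 1) - DD3 f c (n1 + 2) (1) - DD3 f c (2) (n2 + 1) + DD3 f c (2) (1)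

lemma DA_22 (f : ℤ → ℤ → ℤ → ℂ) (c n1 n2 : ℤ) :
    S1 (fun x => S1 (fun y => f (x + 1 + 1) (y + 1 + 1) c) n2) n1 = (TT f (n1 + 2) (n2 + 2) (c+1) - TT f (n1 + 2) (n2 + 2) c) - (TT f (n1 + 2) (2) (c+1) - TT f (n1 + 2) (2) c) - (TT f (2) (n2 + 2) (c+1) - TT f (2) (n2 + 2) c) + (TT f (2) (2) (c+1) - TT f (2) (2) c) := by
  have h := doubleShift (fun a b => f a b c) 2 2 n1 n2
  try simp only [add_zero] at h
  try simp only [add11]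
  linear_combination h + DD3 f c (n1 + 2) (n2 + 2) - DD3 f c (n1 + 2) (2) - DD3 f c (2) (n2 + 2) + DD3 f c (2) (2)

lemma DAs_00 (f : ℤ → ℤ → ℤ → ℂ) (c n1 n2 : ℤ) :
    S1 (fun x => S1 (fun y => f y x c) n2) n1 = TT f n2 n1 (c+1) - TT f n2 n1 c := by
  have h := DD3s f c n1 n2
  unfold DD at h
  exact h

lemma DAs_01 (f : ℤ → ℤ → ℤ → ℂ) (c n1 n2 : ℤ) :
    S1 (fun x => S1 (fun y => f (y + 1) x c) n2) n1 = (TT f (n2 + 1) (n1) (c+1) - TT f (n2 + 1) (n1) c) - (TT f (1) (n1) (c+1) - TT f (1) (n1) c) - (TT f (n2 + 1) (0) (c+1) - TT f (n2 + 1) (0) c) + (TT f (1) (0) (c+1) - TT f (1) (0) c) := by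
  have h := doubleShift (fun a b => f b a c) 0 1 n1 n2
  simp only [add_zero] at h
  linear_combination h + DD3s f c (n1) (n2 + 1) - DD3s f c (n1) (1) - DD3s f c (0) (n2 + 1) + DD3s f c (0) (1)

lemma DAs_02 (f : ℤ → ℤ → ℤ → ℂ) (c n1 n2 : ℤ) :
    S1 (fun x => S1 (fun y => f (y + 1 + 1) x c) n2) n1 = (TT f (n2 + 2) (n1) (c+1) - TT f (n2 + 2) (n1) c) - (TT f (2) (n1) (c+1) - TT f (2) (n1) c) - (TT f (n2 + 2) (0) (c+1) - TT f (n2 + 2) (0) c) + (TT f (2) (0) (c+1) - TT f (2) (0) c) := by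
  have h := doubleShift (fun a b => f b a c) 0 2 n1 n2
  simp only [add_zero] at h
  try simp only [add11]
  linear_combination h + DD3s f c (n1) (n2 + 2) - DD3s f c (n1) (2) - DD3s f c (0) (n2 + 2) + DD3s f c (0) (2)

lemma DAs_10 (f : ℤ → ℤ → ℤ → ℂ) (c n1 n2 : ℤ) :
    S1 (fun x => S1 (fun y => f y (x + 1) c) n2) n1 = (TT f (n2) (n1 + 1) (c+1) - TT f (n2) (n1 + 1) c) - (TT f (0) (n1 + 1) (c+1) - TT f (0) (n1 + 1) c) - (TT f (n2) (1) (c+1) - TT f (n2) (1) c) + (TT f (0) (1) (c+1) - TT f (0) (1) c) := by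
  have h := doubleShift (fun a b => f b a c) 1 0 n1 n2
  simp only [add_zero] at h
  linear_combination h + DD3s f c (n1 + 1) (n2) - DD3s f c (n1 + 1) (0) - DD3s f c (1) (n2) + DD3s f c (1) (0)

lemma DAs_11 (f : ℤ → ℤ → ℤ → ℂ) (c n1 n2 : ℤ) :
    S1 (fun x => S1 (fun y => f (y + 1) (x + 1) c) n2) n1 = (TT f (n2 + 1) (n1 + 1) (c+1) - TT f (n2 + 1) (n1 + 1) c) - (TT f (1) (n1 + 1) (c+1) - TT f (1) (n1 + 1) c) - (TT f (n2 + 1) (1) (c+1) - TT f (n2 + 1) (1) c) + (TT f (1) (1) (c+1) - TT f (1) (1) c) := by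
  have h := doubleShift (fun a b => f b a c) 1 1 n1 n2
  try simp only [add_zero] at h
  linear_combination h + DD3s f c (n1 + 1) (n2 + 1) - DD3s f c (n1 + 1) (1) - DD3s f c (1) (n2 + 1) + DD3s f c (1) (1)

lemma DAs_12 (f : ℤ → ℤ → ℤ → ℂ) (c n1 n2 : ℤ) :
    S1 (fun x => S1 (fun y => f (y + 1 + 1) (x + 1) c) n2) n1 = (TT f (n2 + 2) (n1 + 1) (c+1) - TT f (n2 + 2) (n1 + 1) c) - (TT f (2) (n1 + 1) (c+1) - TT f (2) (n1 + 1) c) - (TT f (n2 + 2) (1) (c+1) - TT f (n2 + 2) (1) c) + (TT f (2) (1) (c+1) - TT f (2) (1) c) := by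
  have h := doubleShift (fun a b => f b a c) 1 2 n1 n2
  try simp only [add_zero] at h
  try simp only [add11]
  linear_combination h + DD3s f c (n1 + 1) (n2 + 2) - DD3s f c (n1 + 1) (2) - DD3s f c (1) (n2 + 2) + DD3s f c (1) (2)

lemma DAs_20 (f : ℤ → ℤ → ℤ → ℂ) (c n1 n2 : ℤ) :
    S1 (fun x => S1 (fun y => f y (x + 1 + 1) c) n2) n1 = (TT f (n2) (n1 + 2) (c+1) - TT f (n2) (n1 + 2) c) - (TT f (0) (n1 + 2) (c+1) - TT f (0) (n1 + 2) c) - (TT f (n2) (2) (c+1) - TT f (n2) (2) c) + (TT f (0) (2) (c+1) - TT f (0) (2) c) := by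
  have h := doubleShift (fun a b => f b a c) 2 0 n1 n2
  simp only [add_zero] at h
  try simp only [add11]
  linear_combination h + DD3s f c (n1 + 2) (n2) - DD3s f c (n1 + 2) (0) - DD3s f c (2) (n2) + DD3s f c (2) (0)

lemma DAs_21 (f : ℤ → ℤ → ℤ → ℂ) (c n1 n2 : ℤ) :
    S1 (fun x => S1 (fun y => f (y + 1) (x + 1 + 1) c) n2) n1 = (TT f (n2 + 1) (n1 + 2) (c+1) - TT f (n2 + 1) (n1 + 2) c) - (TT f (1) (n1 + 2) (c+1) - TT f (1) (n1 + 2) c) - (TT f (n2 + 1) (2) (c+1) - TT f (n2 + 1) (2) c) + (TT f (1) (2) (c+1) - TT f (1) (2) c) := by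
  have h := doubleShift (fun a b => f b a c) 2 1 n1 n2
  try simp only [add_zero] at h
  try simp only [add11]
  linear_combination h + DD3s f c (n1 + 2) (n2 + 1) - DD3s f c (n1 + 2) (1) - DD3s f c (2) (n2 + 1) + DD3s f c (2) (1)

lemma DAs_22 (f : ℤ → ℤ → ℤ → ℂ) (c n1 n2 : ℤ) :
    S1 (fun x => S1 (fun y => f (y + 1 + 1) (x + 1 + 1) c) n2) n1 = (TT f (n2 + 2) (n1 + 2) (c+1) - TT f (n2 + 2) (n1 + 2) c) - (TT f (2) (n1 + 2) (c+1) - TT f (2) (n1 + 2) c) - (TT f (n2 + 2) (2) (c+1) - TT f (n2 + 2) (2) c) + (TT f (2) (2) (c+1) - TT f (2) (2) c) := by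
  have h := doubleShift (fun a b => f b a c) 2 2 n1 n2
  try simp only [add_zero] at h
  try simp only [add11]
  linear_combination h + DD3s f c (n1 + 2) (n2 + 2) - DD3s f c (n1 + 2) (2) - DD3s f c (2) (n2 + 2) + DD3s f c (2) (2)

lemma DB_00 (f : ℤ → ℤ → ℤ → ℂ) (c n1 n2 : ℤ) :
    S1 (fun x => S1 (fun y => f c x y) n2) n1 = TT f (c+1) n1 n2 - TT f c n1 n2 := by
  have h := DD1 f c n1 n2
  unfold DD at h
  exact h

lemma DB_01 (f : ℤ → ℤ → ℤ → ℂ) (c n1 n2 : ℤ) :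
    S1 (fun x => S1 (fun y => f c x (y + 1)) n2) n1 = (TT f (c+1) (n1) (n2 + 1) - TT f c (n1) (n2 + 1)) - (TT f (c+1) (n1) (1) - TT f c (n1) (1)) - (TT f (c+1) (0) (n2 + 1) - TT f c (0) (n2 + 1)) + (TT f (c+1) (0) (1) - TT f c (0) (1)) := by
  have h := doubleShift (fun a b => f c a b) 0 1 n1 n2
  simp only [add_zero] at h
  linear_combination h + DD1 f c (n1) (n2 + 1) - DD1 f c (n1) (1) - DD1 f c (0) (n2 + 1) + DD1 f c (0) (1)

lemma DB_02 (f : ℤ → ℤ → ℤ → ℂ) (c n1 n2 : ℤ) :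
    S1 (fun x => S1 (fun y => f c x (y + 1 + 1)) n2) n1 = (TT f (c+1) (n1) (n2 + 2) - TT f c (n1) (n2 + 2)) - (TT f (c+1) (n1) (2) - TT f c (n1) (2)) - (TT f (c+1) (0) (n2 + 2) - TT f c (0) (n2 + 2)) + (TT f (c+1) (0) (2) - TT f c (0) (2)) := by
  have h := doubleShift (fun a b => f c a b) 0 2 n1 n2
  simp only [add_zero] at h
  try simp only [add11]
  linear_combination h + DD1 f c (n1) (n2 + 2) - DD1 f c (n1) (2) - DD1 f c (0) (n2 + 2) + DD1 f c (0) (2)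

lemma DB_10 (f : ℤ → ℤ → ℤ → ℂ) (c n1 n2 : ℤ) :
    S1 (fun x => S1 (fun y => f c (x + 1) y) n2) n1 = (TT f (c+1) (n1 + 1) (n2) - TT f c (n1 + 1) (n2)) - (TT f (c+1) (n1 + 1) (0) - TT f c (n1 + 1) (0)) - (TT f (c+1) (1) (n2) - TT f c (1) (n2)) + (TT f (c+1) (1) (0) - TT f c (1) (0)) := by
  have h := doubleShift (fun a b => f c a b) 1 0 n1 n2
  simp only [add_zero] at h
  linear_combination h + DD1 f c (n1 + 1) (n2) - DD1 f c (n1 + 1) (0) - DD1 f c (1) (n2) + DD1 f c (1) (0)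

lemma DB_11 (f : ℤ → ℤ → ℤ → ℂ) (c n1 n2 : ℤ) :
    S1 (fun x => S1 (fun y => f c (x + 1) (y + 1)) n2) n1 = (TT f (c+1) (n1 + 1) (n2 + 1) - TT f c (n1 + 1) (n2 + 1)) - (TT f (c+1) (n1 + 1) (1) - TT f c (n1 + 1) (1)) - (TT f (c+1) (1) (n2 + 1) - TT f c (1) (n2 + 1)) + (TT f (c+1) (1) (1) - TT f c (1) (1)) := by
  have h := doubleShift (fun a b => f c a b) 1 1 n1 n2
  try simp only [add_zero] at h
  linear_combination h + DD1 f c (n1 + 1) (n2 + 1) - DD1 f c (n1 + 1) (1) - DD1 f c (1) (n2 + 1) + DD1 f c (1) (1)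

lemma DB_12 (f : ℤ → ℤ → ℤ → ℂ) (c n1 n2 : ℤ) :
    S1 (fun x => S1 (fun y => f c (x + 1) (y + 1 + 1)) n2) n1 = (TT f (c+1) (n1 + 1) (n2 + 2) - TT f c (n1 + 1) (n2 + 2)) - (TT f (c+1) (n1 + 1) (2) - TT f c (n1 + 1) (2)) - (TT f (c+1) (1) (n2 + 2) - TT f c (1) (n2 + 2)) + (TT f (c+1) (1) (2) - TT f c (1) (2)) := by
  have h := doubleShift (fun a b => f c a b) 1 2 n1 n2
  try simp only [add_zero] at h
  try simp only [add11]
  linear_combination h + DD1 f c (n1 + 1) (n2 + 2) - DD1 f c (n1 + 1) (2) - DD1 f c (1) (n2 + 2) + DD1 f c (1) (2)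

lemma DB_20 (f : ℤ → ℤ → ℤ → ℂ) (c n1 n2 : ℤ) :
    S1 (fun x => S1 (fun y => f c (x + 1 + 1) y) n2) n1 = (TT f (c+1) (n1 + 2) (n2) - TT f c (n1 + 2) (n2)) - (TT f (c+1) (n1 + 2) (0) - TT f c (n1 + 2) (0)) - (TT f (c+1) (2) (n2) - TT f c (2) (n2)) + (TT f (c+1) (2) (0) - TT f c (2) (0)) := by
  have h := doubleShift (fun a b => f c a b) 2 0 n1 n2
  simp only [add_zero] at h
  try simp only [add11]
  linear_combination h + DD1 f c (n1 + 2) (n2) - DD1 f c (n1 + 2) (0) - DD1 f c (2) (n2) + DD1 f c (2) (0)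

lemma DB_21 (f : ℤ → ℤ → ℤ → ℂ) (c n1 n2 : ℤ) :
    S1 (fun x => S1 (fun y => f c (x + 1 + 1) (y + 1)) n2) n1 = (TT f (c+1) (n1 + 2) (n2 + 1) - TT f c (n1 + 2) (n2 + 1)) - (TT f (c+1) (n1 + 2) (1) - TT f c (n1 + 2) (1)) - (TT f (c+1) (2) (n2 + 1) - TT f c (2) (n2 + 1)) + (TT f (c+1) (2) (1) - TT f c (2) (1)) := by
  have h := doubleShift (fun a b => f c a b) 2 1 n1 n2
  try simp only [add_zero] at h
  try simp only [add11]
  linear_combination h + DD1 f c (n1 + 2) (n2 + 1) - DD1 f c (n1 + 2) (1) - DD1 f c (2) (n2 + 1) + DD1 f c (2) (1)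

lemma DB_22 (f : ℤ → ℤ → ℤ → ℂ) (c n1 n2 : ℤ) :
    S1 (fun x => S1 (fun y => f c (x + 1 + 1) (y + 1 + 1)) n2) n1 = (TT f (c+1) (n1 + 2) (n2 + 2) - TT f c (n1 + 2) (n2 + 2)) - (TT f (c+1) (n1 + 2) (2) - TT f c (n1 + 2) (2)) - (TT f (c+1) (2) (n2 + 2) - TT f c (2) (n2 + 2)) + (TT f (c+1) (2) (2) - TT f c (2) (2)) := by
  have h := doubleShift (fun a b => f c a b) 2 2 n1 n2
  try simp only [add_zero] at h
  try simp only [add11]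
  linear_combination h + DD1 f c (n1 + 2) (n2 + 2) - DD1 f c (n1 + 2) (2) - DD1 f c (2) (n2 + 2) + DD1 f c (2) (2)

lemma DBs_00 (f : ℤ → ℤ → ℤ → ℂ) (c n1 n2 : ℤ) :
    S1 (fun x => S1 (fun y => f c y x) n2) n1 = TT f (c+1) n2 n1 - TT f c n2 n1 := by
  have h := DD1s f c n1 n2
  unfold DD at h
  exact h

lemma DBs_01 (f : ℤ → ℤ → ℤ → ℂ) (c n1 n2 : ℤ) :
    S1 (fun x => S1 (fun y => f c (y + 1) x) n2) n1 = (TT f (c+1) (n2 + 1) (n1) - TT f c (n2 + 1) (n1)) - (TT f (c+1) (1) (n1) - TT f c (1) (n1)) - (TT f (c+1) (n2 + 1) (0) - TT f c (n2 + 1) (0)) + (TT f (c+1) (1) (0) - TT f c (1) (0)) := by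
  have h := doubleShift (fun a b => f c b a) 0 1 n1 n2
  simp only [add_zero] at h
  linear_combination h + DD1s f c (n1) (n2 + 1) - DD1s f c (n1) (1) - DD1s f c (0) (n2 + 1) + DD1s f c (0) (1)

lemma DBs_02 (f : ℤ → ℤ → ℤ → ℂ) (c n1 n2 : ℤ) :
    S1 (fun x => S1 (fun y => f c (y + 1 + 1) x) n2) n1 = (TT f (c+1) (n2 + 2) (n1) - TT f c (n2 + 2) (n1)) - (TT f (c+1) (2) (n1) - TT f c (2) (n1)) - (TT f (c+1) (n2 + 2) (0) - TT f c (n2 + 2) (0)) + (TT f (c+1) (2) (0) - TT f c (2) (0)) := by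
  have h := doubleShift (fun a b => f c b a) 0 2 n1 n2
  simp only [add_zero] at h
  try simp only [add11]
  linear_combination h + DD1s f c (n1) (n2 + 2) - DD1s f c (n1) (2) - DD1s f c (0) (n2 + 2) + DD1s f c (0) (2)

lemma DBs_10 (f : ℤ → ℤ → ℤ → ℂ) (c n1 n2 : ℤ) :
    S1 (fun x => S1 (fun y => f c y (x + 1)) n2) n1 = (TT f (c+1) (n2) (n1 + 1) - TT f c (n2) (n1 + 1)) - (TT f (c+1) (0) (n1 + 1) - TT f c (0) (n1 + 1)) - (TT f (c+1) (n2) (1) - TT f c (n2) (1)) + (TT f (c+1) (0) (1) - TT f c (0) (1)) := by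
  have h := doubleShift (fun a b => f c b a) 1 0 n1 n2
  simp only [add_zero] at h
  linear_combination h + DD1s f c (n1 + 1) (n2) - DD1s f c (n1 + 1) (0) - DD1s f c (1) (n2) + DD1s f c (1) (0)

lemma DBs_11 (f : ℤ → ℤ → ℤ → ℂ) (c n1 n2 : ℤ) :
    S1 (fun x => S1 (fun y => f c (y + 1) (x + 1)) n2) n1 = (TT f (c+1) (n2 + 1) (n1 + 1) - TT f c (n2 + 1) (n1 + 1)) - (TT f (c+1) (1) (n1 + 1) - TT f c (1) (n1 + 1)) - (TT f (c+1) (n2 + 1) (1) - TT f c (n2 + 1) (1)) + (TT f (c+1) (1) (1) - TT f c (1) (1)) := by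
  have h := doubleShift (fun a b => f c b a) 1 1 n1 n2
  try simp only [add_zero] at h
  linear_combination h + DD1s f c (n1 + 1) (n2 + 1) - DD1s f c (n1 + 1) (1) - DD1s f c (1) (n2 + 1) + DD1s f c (1) (1)

lemma DBs_12 (f : ℤ → ℤ → ℤ → ℂ) (c n1 n2 : ℤ) :
    S1 (fun x => S1 (fun y => f c (y + 1 + 1) (x + 1)) n2) n1 = (TT f (c+1) (n2 + 2) (n1 + 1) - TT f c (n2 + 2) (n1 + 1)) - (TT f (c+1) (2) (n1 + 1) - TT f c (2) (n1 + 1)) - (TT f (c+1) (n2 + 2) (1) - TT f c (n2 + 2) (1)) + (TT f (c+1) (2) (1) - TT f c (2) (1)) := by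
  have h := doubleShift (fun a b => f c b a) 1 2 n1 n2
  try simp only [add_zero] at h
  try simp only [add11]
  linear_combination h + DD1s f c (n1 + 1) (n2 + 2) - DD1s f c (n1 + 1) (2) - DD1s f c (1) (n2 + 2) + DD1s f c (1) (2)

lemma DBs_20 (f : ℤ → ℤ → ℤ → ℂ) (c n1 n2 : ℤ) :
    S1 (fun x => S1 (fun y => f c y (x + 1 + 1)) n2) n1 = (TT f (c+1) (n2) (n1 + 2) - TT f c (n2) (n1 + 2)) - (TT f (c+1) (0) (n1 + 2) - TT f c (0) (n1 + 2)) - (TT f (c+1) (n2) (2) - TT f c (n2) (2)) + (TT f (c+1) (0) (2) - TT f c (0) (2)) := by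
  have h := doubleShift (fun a b => f c b a) 2 0 n1 n2
  simp only [add_zero] at h
  try simp only [add11]
  linear_combination h + DD1s f c (n1 + 2) (n2) - DD1s f c (n1 + 2) (0) - DD1s f c (2) (n2) + DD1s f c (2) (0)

lemma DBs_21 (f : ℤ → ℤ → ℤ → ℂ) (c n1 n2 : ℤ) :
    S1 (fun x => S1 (fun y => f c (y + 1) (x + 1 + 1)) n2) n1 = (TT f (c+1) (n2 + 1) (n1 + 2) - TT f c (n2 + 1) (n1 + 2)) - (TT f (c+1) (1) (n1 + 2) - TT f c (1) (n1 + 2)) - (TT f (c+1) (n2 + 1) (2) - TT f c (n2 + 1) (2)) + (TT f (c+1) (1) (2) - TT f c (1) (2)) := by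
  have h := doubleShift (fun a b => f c b a) 2 1 n1 n2
  try simp only [add_zero] at h
  try simp only [add11]
  linear_combination h + DD1s f c (n1 + 2) (n2 + 1) - DD1s f c (n1 + 2) (1) - DD1s f c (2) (n2 + 1) + DD1s f c (2) (1)

lemma DBs_22 (f : ℤ → ℤ → ℤ → ℂ) (c n1 n2 : ℤ) :
    S1 (fun x => S1 (fun y => f c (y + 1 + 1) (x + 1 + 1)) n2) n1 = (TT f (c+1) (n2 + 2) (n1 + 2) - TT f c (n2 + 2) (n1 + 2)) - (TT f (c+1) (2) (n1 + 2) - TT f c (2) (n1 + 2)) - (TT f (c+1) (n2 + 2) (2) - TT f c (n2 + 2) (2)) + (TT f (c+1) (2) (2) - TT f c (2) (2)) := by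
  have h := doubleShift (fun a b => f c b a) 2 2 n1 n2
  try simp only [add_zero] at h
  try simp only [add11]
  linear_combination h + DD1s f c (n1 + 2) (n2 + 2) - DD1s f c (n1 + 2) (2) - DD1s f c (2) (n2 + 2) + DD1s f c (2) (2)

lemma Dmid (f : ℤ → ℤ → ℤ → ℂ) (c n1 n2 : ℤ) :
    S1 (fun x => S1 (fun y => f x c y) n2) n1 = TT f n1 (c+1) n2 - TT f n1 c n2 := by
  have h := DD2 f c n1 n2
  unfold DD at h
  exact h

lemma Tn100 (f : ℤ → ℤ → ℤ → ℂ) (n1 n2 n3 : ℤ) :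
    S1 (fun x => S1 (fun y => S1 (fun z => f (x + 1) y z) n3) n2) n1 = TT f (n1 + 1) (n2) (n3) - TT f (n1 + 1) (n2) (0) - TT f (n1 + 1) (0) (n3) + TT f (n1 + 1) (0) (0) - TT f (1) (n2) (n3) + TT f (1) (n2) (0) + TT f (1) (0) (n3) - TT f (1) (0) (0) := by
  have h := tripleShift f 1 0 0 n1 n2 n3
  simp only [add_zero] at h
  linear_combination h

lemma Tn101 (f : ℤ → ℤ → ℤ → ℂ) (n1 n2 n3 : ℤ) :
    S1 (fun x => S1 (fun y => S1 (fun z => f (x + 1) y (z + 1)) n3) n2) n1 = TT f (n1 + 1) (n2) (n3 + 1) - TT f (n1 + 1) (n2) (1) - TT f (n1 + 1) (0) (n3 + 1) + TT f (n1 + 1) (0) (1) - TT f (1) (n2) (n3 + 1) + TT f (1) (n2) (1) + TT f (1) (0) (n3 + 1) - TT f (1) (0) (1) := by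
  have h := tripleShift f 1 0 1 n1 n2 n3
  simp only [add_zero] at h
  linear_combination h

lemma Tn111 (f : ℤ → ℤ → ℤ → ℂ) (n1 n2 n3 : ℤ) :
    S1 (fun x => S1 (fun y => S1 (fun z => f (x + 1) (y + 1) (z + 1)) n3) n2) n1 = TT f (n1 + 1) (n2 + 1) (n3 + 1) - TT f (n1 + 1) (n2 + 1) (1) - TT f (n1 + 1) (1) (n3 + 1) + TT f (n1 + 1) (1) (1) - TT f (1) (n2 + 1) (n3 + 1) + TT f (1) (n2 + 1) (1) + TT f (1) (1) (n3 + 1) - TT f (1) (1) (1) := by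
  have h := tripleShift f 1 1 1 n1 n2 n3
  try simp only [add_zero] at h
  linear_combination h

lemma Tp213_100 (f : ℤ → ℤ → ℤ → ℂ) (n1 n2 n3 : ℤ) :
    S1 (fun x => S1 (fun y => S1 (fun z => f y (x + 1) z) n3) n2) n1 = TT f (n2) (n1 + 1) (n3) - TT f (n2) (n1 + 1) (0) - TT f (0) (n1 + 1) (n3) + TT f (0) (n1 + 1) (0) - TT f (n2) (1) (n3) + TT f (n2) (1) (0) + TT f (0) (1) (n3) - TT f (0) (1) (0) := by
  have h := tripleShift (fun a b c => f b a c) 1 0 0 n1 n2 n3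
  simp only [add_zero] at h
  linear_combination h + TT_213 f (n1 + 1) (n2) (n3) - TT_213 f (n1 + 1) (n2) (0) - TT_213 f (n1 + 1) (0) (n3) + TT_213 f (n1 + 1) (0) (0) - TT_213 f (1) (n2) (n3) + TT_213 f (1) (n2) (0) + TT_213 f (1) (0) (n3) - TT_213 f (1) (0) (0)

lemma Tp213_111 (f : ℤ → ℤ → ℤ → ℂ) (n1 n2 n3 : ℤ) :
    S1 (fun x => S1 (fun y => S1 (fun z => f (y + 1) (x + 1) (z + 1)) n3) n2) n1 = TT f (n2 + 1) (n1 + 1) (n3 + 1) - TT f (n2 + 1) (n1 + 1) (1) - TT f (1) (n1 + 1) (n3 + 1) + TT f (1) (n1 + 1) (1) - TT f (n2 + 1) (1) (n3 + 1) + TT f (n2 + 1) (1) (1) + TT f (1) (1) (n3 + 1) - TT f (1) (1) (1) := by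
  have h := tripleShift (fun a b c => f b a c) 1 1 1 n1 n2 n3
  try simp only [add_zero] at h
  linear_combination h + TT_213 f (n1 + 1) (n2 + 1) (n3 + 1) - TT_213 f (n1 + 1) (n2 + 1) (1) - TT_213 f (n1 + 1) (1) (n3 + 1) + TT_213 f (n1 + 1) (1) (1) - TT_213 f (1) (n2 + 1) (n3 + 1) + TT_213 f (1) (n2 + 1) (1) + TT_213 f (1) (1) (n3 + 1) - TT_213 f (1) (1) (1)

lemma Tp213_001 (f : ℤ → ℤ → ℤ → ℂ) (n1 n2 n3 : ℤ) :
    S1 (fun x => S1 (fun y => S1 (fun z => f y x (z + 1)) n3) n2) n1 = TT f (n2) (n1) (n3 + 1) - TT f (n2) (n1) (1) - TT f (0) (n1) (n3 + 1) + TT f (0) (n1) (1) - TT f (n2) (0) (n3 + 1) + TT f (n2) (0) (1) + TT f (0) (0) (n3 + 1) - TT f (0) (0) (1) := by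
  have h := tripleShift (fun a b c => f b a c) 0 0 1 n1 n2 n3
  simp only [add_zero] at h
  linear_combination h + TT_213 f (n1) (n2) (n3 + 1) - TT_213 f (n1) (n2) (1) - TT_213 f (n1) (0) (n3 + 1) + TT_213 f (n1) (0) (1) - TT_213 f (0) (n2) (n3 + 1) + TT_213 f (0) (n2) (1) + TT_213 f (0) (0) (n3 + 1) - TT_213 f (0) (0) (1)

lemma Tp132_100 (f : ℤ → ℤ → ℤ → ℂ) (n1 n2 n3 : ℤ) :
    S1 (fun x => S1 (fun y => S1 (fun z => f (x + 1) z y) n3) n2) n1 = TT f (n1 + 1) (n3) (n2) - TT f (n1 + 1) (0) (n2) - TT f (n1 + 1) (n3) (0) + TT f (n1 + 1) (0) (0) - TT f (1) (n3) (n2) + TT f (1) (0) (n2) + TT f (1) (n3) (0) - TT f (1) (0) (0) := by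
  have h := tripleShift (fun a b c => f a c b) 1 0 0 n1 n2 n3
  simp only [add_zero] at h
  linear_combination h + TT_132 f (n1 + 1) (n2) (n3) - TT_132 f (n1 + 1) (n2) (0) - TT_132 f (n1 + 1) (0) (n3) + TT_132 f (n1 + 1) (0) (0) - TT_132 f (1) (n2) (n3) + TT_132 f (1) (n2) (0) + TT_132 f (1) (0) (n3) - TT_132 f (1) (0) (0)

lemma Tp132_001 (f : ℤ → ℤ → ℤ → ℂ) (n1 n2 n3 : ℤ) :
    S1 (fun x => S1 (fun y => S1 (fun z => f x (z + 1) y) n3) n2) n1 = TT f (n1) (n3 + 1) (n2) - TT f (n1) (1) (n2) - TT f (n1) (n3 + 1) (0) + TT f (n1) (1) (0) - TT f (0) (n3 + 1) (n2) + TT f (0) (1) (n2) + TT f (0) (n3 + 1) (0) - TT f (0) (1) (0) := by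
  have h := tripleShift (fun a b c => f a c b) 0 0 1 n1 n2 n3
  simp only [add_zero] at h
  linear_combination h + TT_132 f (n1) (n2) (n3 + 1) - TT_132 f (n1) (n2) (1) - TT_132 f (n1) (0) (n3 + 1) + TT_132 f (n1) (0) (1) - TT_132 f (0) (n2) (n3 + 1) + TT_132 f (0) (n2) (1) + TT_132 f (0) (0) (n3 + 1) - TT_132 f (0) (0) (1)

lemma Tp132_110 (f : ℤ → ℤ → ℤ → ℂ) (n1 n2 n3 : ℤ) :
    S1 (fun x => S1 (fun y => S1 (fun z => f (x + 1) z (y + 1)) n3) n2) n1 = TT f (n1 + 1) (n3) (n2 + 1) - TT f (n1 + 1) (0) (n2 + 1) - TT f (n1 + 1) (n3) (1) + TT f (n1 + 1) (0) (1) - TT f (1) (n3) (n2 + 1) + TT f (1) (0) (n2 + 1) + TT f (1) (n3) (1) - TT f (1) (0) (1) := by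
  have h := tripleShift (fun a b c => f a c b) 1 1 0 n1 n2 n3
  simp only [add_zero] at h
  linear_combination h + TT_132 f (n1 + 1) (n2 + 1) (n3) - TT_132 f (n1 + 1) (n2 + 1) (0) - TT_132 f (n1 + 1) (1) (n3) + TT_132 f (n1 + 1) (1) (0) - TT_132 f (1) (n2 + 1) (n3) + TT_132 f (1) (n2 + 1) (0) + TT_132 f (1) (1) (n3) - TT_132 f (1) (1) (0)
-- vector helpers
lemma upd4_1 (a b c d v : ℤ) : Function.update ![a,b,c,d] 1 v = ![a,v,c,d] := by
  funext i; fin_cases i <;> simp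
lemma upd4_2 (a b c d v : ℤ) : Function.update ![a,b,c,d] 2 v = ![a,b,v,d] := by
  funext i; fin_cases i <;> simp
lemma upd3_0 (a b c v : ℤ) : Function.update ![a,b,c] 0 v = ![v,b,c] := by
  funext i; fin_cases i <;> simp
lemma upd3_1 (a b c v : ℤ) : Function.update ![a,b,c] 1 v = ![a,v,c] := by
  funext i; fin_cases i <;> simp
lemma upd3_2 (a b c v : ℤ) : Function.update ![a,b,c] 2 v = ![a,b,v] := by
  funext i; fin_cases i <;> simp
lemma swap4_12 (a b c d : ℤ) : ![a,b,c,d] ∘ Equiv.swap 1 2 = ![a,c,b,d] := by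
  funext i; fin_cases i <;> simp [Equiv.swap_apply_def] <;> decide
lemma swap3_01 (a b c : ℤ) : ![a,b,c] ∘ Equiv.swap 0 1 = ![b,a,c] := by
  funext i; fin_cases i <;> simp [Equiv.swap_apply_def] <;> decide
lemma swap3_12 (a b c : ℤ) : ![a,b,c] ∘ Equiv.swap 1 2 = ![a,c,b] := by
  funext i; fin_cases i <;> simp [Equiv.swap_apply_def] <;> decide

lemma sumOp2_explicit (A : (Fin 3 → ℤ) → ℂ) (a b c d : ℤ) :
  sumOp 2 ![a,b,c,d] A =
    extSum (fun l1 => extSum (fun l2 => extSum (fun l3 => A ![l1,l2,l3]) (c+1) d) (b+1) c) a b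
  + extSum (fun l1 => extSum (fun l3 => A ![l1,b,l3]) (c+1) d) a (b-1)
  + (extSum (fun l1 => extSum (fun l2 => A ![l1,l2,c]) (b+1) (c-1)) a b
  + extSum (fun l1 => A ![l1,b,c]) a (b-1)) := by
  have h3 : ∀ (l1 l2 l3 : ℤ), (Fin.snoc (Fin.snoc (fun _ : Fin 1 => l1) l2) l3 : Fin 3 → ℤ) = ![l1,l2,l3] := by
    intro l1 l2 l3; funext i; fin_cases i <;> simp [Fin.snoc]
  simp only [sumOp, Fin.init, Fin.snoc, Function.update, Fin.last]
  norm_num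
  try simp only [h3]

set_option maxHeartbeats 4000000
/-- First formula of the fundamental lemma, for
`g(k₁,k₂,k₃,k₄) = ∑^{(k₁,k₂,k₃,k₄)}_{(l₁,l₂,l₃)} f(l₁,l₂,l₃)`. -/
theorem fundamental_lemma_three_rows (f : ℤ → ℤ → ℤ → ℂ) (k1 k2 k3 k4 : ℤ) :
    Tfun 1 2 (fun x : Fin 4 → ℤ =>
        sumOp 2 x (fun l : Fin 3 → ℤ => f (l 0) (l 1) (l 2))) ![k1, k2, k3, k4] =
      -(1 / 2 : ℂ) *
        (extSum (fun l1 => extSum (fun l2 => extSum (fun l3 =>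
            Tfun 0 1 (fun l : Fin 3 → ℤ => f (l 0) (l 1) (l 2)) ![l1, l2, l3])
              k2 k4) (k2 + 1) k3) (k2 + 1) k3 +
         extSum (fun l1 => extSum (fun l2 => extSum (fun l3 =>
            Tfun 1 2 (fun l : Fin 3 → ℤ => f (l 0) (l 1) (l 2)) ![l1, l2, l3])
              k2 (k3 - 1)) k2 (k3 - 1)) k1 (k2 + 1)) +
      (1 / 2 : ℂ) *
        (extSum (fun l1 => extSum (fun l2 =>
            Dfun 1 (fun y => Tfun 0 1 (fun l : Fin 3 → ℤ => f (l 0) (l 1) (l 2)) y +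
                Efun 0 (Tfun 0 1 (fun l : Fin 3 → ℤ => f (l 0) (l 1) (l 2))) y)
              ![l1, l2, k2]) k2 (k3 - 1)) k2 (k3 - 1) -
         extSum (fun l2 => extSum (fun l3 =>
            Dfun 1 (fun y => Tfun 1 2 (fun l : Fin 3 → ℤ => f (l 0) (l 1) (l 2)) y +
                Efun 2 (Tfun 1 2 (fun l : Fin 3 → ℤ => f (l 0) (l 1) (l 2))) y)
              ![k2 + 1, l2, l3]) k2 (k3 - 1)) k2 (k3 - 1)) +
      (1 / 2 : ℂ) *
        (Tfun 0 1 (fun l : Fin 3 → ℤ => f (l 0) (l 1) (l 2)) ![k2, k2, k2 + 1] -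
         Tfun 0 1 (fun l : Fin 3 → ℤ => f (l 0) (l 1) (l 2)) ![k2, k2, k3 + 1] +
         Tfun 1 2 (fun l : Fin 3 → ℤ => f (l 0) (l 1) (l 2)) ![k2, k2, k2] -
         Tfun 1 2 (fun l : Fin 3 → ℤ => f (l 0) (l 1) (l 2)) ![k3, k2, k2]) -
      Tfun 0 1 (fun l : Fin 3 → ℤ => f (l 0) (l 1) (l 2)) ![k2, k3, k2 + 1] -
      Tfun 1 2 (fun l : Fin 3 → ℤ => f (l 0) (l 1) (l 2)) ![k2, k2, k3] := by
  simp only [Tfun, Sfun, Efun, Dfun]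
  simp only [Matrix.cons_val_zero, Matrix.cons_val_one, Matrix.head_cons, Matrix.cons_val_two,
    Matrix.tail_cons, Matrix.cons_val_three, upd4_1, upd4_2, upd3_0, upd3_1, upd3_2,
    swap4_12, swap3_01, swap3_12]
  simp only [sumOp2_explicit]
  simp only [Matrix.cons_val_zero, Matrix.cons_val_one, Matrix.head_cons, Matrix.cons_val_two,
    Matrix.tail_cons]
  simp only [extSum_eq_S1, S1_sub, S1_add]
  simp only [Tn000 f, Tn110 f, Tn010 f, Tn001 f, Tn011 f, Tp213_000 f, Tp213_110 f,
    Tp213_010 f, Tp132_000 f, Tp132_010 f, Tp132_011 f, Tn100 f, Tn101 f, Tn111 f, Tp213_100 f, Tp213_111 f, Tp213_001 f, Tp132_100 f, Tp132_001 f, Tp132_110 f]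
  simp only [DA_00 f, DA_01 f, DA_02 f, DA_10 f, DA_11 f, DA_12 f, DA_20 f, DA_21 f, DA_22 f,
    DAs_00 f, DAs_01 f, DAs_02 f, DAs_10 f, DAs_11 f, DAs_12 f, DAs_20 f, DAs_21 f, DAs_22 f,
    DB_00 f, DB_01 f, DB_02 f, DB_10 f, DB_11 f, DB_12 f, DB_20 f, DB_21 f, DB_22 f,
    DBs_00 f, DBs_01 f, DBs_02 f, DBs_10 f, DBs_11 f, DBs_12 f, DBs_20 f, DBs_21 f, DBs_22 f,
    Dmid f]
  simp only [SS f]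
  simp only [eval3 f]
  simp only [TT_zero1, TT_zero2, TT_zero3]
  simp only [sub_add_cancel, add_sub_cancel_right, add11]
  ring1
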